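/- Let (X,Σ,m) be a σ-finite measure space, B a separable Banach space, and E a Banach B-bundle over X. If the section space Γ₂(E) is a Hilbert space, then E(x) is a Hilbert space for m-a.e. x ∈ X. -/

import Mathlib

open MeasureTheory
open scoped ENNReal

/-- A *Banach `B`-bundle* over a measurable space `X`: a weakly measurable multivalued map
whose values are closed linear subspaces of `B`. -/
structure BanachBundle (X : Type*) [MeasurableSpace X]
    (B : Type*) [NormedAddCommGroup B] [NormedSpace ℝ B] where
  fiber : X → Submodule ℝ B
  isClosed_fiber : ∀ x, IsClosed (fiber x : Set B)
  weaklyMeasurable : ∀ U : Set B, IsOpen U →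
    MeasurableSet {x | ((fiber x : Set B) ∩ U).Nonempty}

/-- The space `Γ_p(E)` of `L^p`-sections of a Banach bundle `E`, realized as the subspace of
`L^p(m;B)` of elements whose representatives take values in the fibers `m`-a.e. -/
noncomputable def BanachBundle.sections {X B : Type*} [MeasurableSpace X]
    [NormedAddCommGroup B] [NormedSpace ℝ B]
    (m : Measure X) (p : ℝ≥0∞) [Fact (1 ≤ p)] (E : BanachBundle X B) :
    Submodule ℝ (Lp B p m) where
  carrier := {f | ∀ᵐ x ∂m, (f : X → B) x ∈ E.fiber x}
  zero_mem' := by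
    filter_upwards [Lp.coeFn_zero B p m] with x hx
    show (((0 : Lp B p m) : X → B)) x ∈ E.fiber x
    rw [hx]
    exact (E.fiber x).zero_mem
  add_mem' := by
    intro f g hf hg
    filter_upwards [hf, hg, Lp.coeFn_add f g] with x h1 h2 h3
    show (((f + g : Lp B p m) : X → B)) x ∈ E.fiber x
    rw [h3]
    exact (E.fiber x).add_mem h1 h2
  smul_mem' := by
    intro c f hf
    filter_upwards [hf, Lp.coeFn_smul c f] with x h1 h2
    show (((c • f : Lp B p m) : X → B)) x ∈ E.fiber x
    rw [h2]
    exact (E.fiber x).smul_mem c h1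


open Metric Set

set_option linter.unusedSectionVars false

open MeasureTheory Metric Set
open scoped ENNReal

namespace BanachBundle

variable {X B : Type*} [MeasurableSpace X]
  [NormedAddCommGroup B] [NormedSpace ℝ B] [CompleteSpace B]
  [TopologicalSpace.SeparableSpace B]
  (E : BanachBundle X B)

noncomputable def ds : ℕ → B :=
  haveI : Nonempty B := ⟨0⟩
  TopologicalSpace.denseSeq B

lemma denseRange_ds : DenseRange (ds : ℕ → B) :=
  haveI : Nonempty B := ⟨0⟩
  TopologicalSpace.denseRange_denseSeq B

lemma meas_hit (U : Set B) (hU : IsOpen U) :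
    MeasurableSet {x | ((E.fiber x : Set B) ∩ U).Nonempty} :=
  E.weaklyMeasurable U hU

lemma meas_cond {σ : X → ℕ} (hσ : Measurable σ) (s r : ℝ) (n : ℕ) :
    MeasurableSet {x | ((E.fiber x : Set B) ∩ (ball (ds n) s ∩ ball (ds (σ x)) r)).Nonempty} := by
  have : {x | ((E.fiber x : Set B) ∩ (ball (ds n) s ∩ ball (ds (σ x)) r)).Nonempty}
      = ⋃ k, σ ⁻¹' {k} ∩
        {x | ((E.fiber x : Set B) ∩ (ball (ds n) s ∩ ball (ds k) r)).Nonempty} := by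
    ext x
    simp only [Set.mem_setOf_eq, Set.mem_iUnion, Set.mem_inter_iff, Set.mem_preimage,
      Set.mem_singleton_iff]
    constructor
    · intro h; exact ⟨σ x, rfl, h⟩
    · rintro ⟨k, hk, h⟩; rwa [hk]
  rw [this]
  exact MeasurableSet.iUnion fun k => (hσ (measurableSet_singleton k)).inter
    (E.meas_hit _ (isOpen_ball.inter isOpen_ball))

/-- radius at scale `i`, stage `k` -/
noncomputable def rad (i k : ℕ) : ℝ := (2:ℝ)⁻¹ ^ (i + k)

lemma rad_pos (i k : ℕ) : 0 < rad i k := by unfold rad; positivity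

lemma exists_base (i : ℕ) (x : X) :
    ∃ n, ((E.fiber x : Set B) ∩ ball (ds n) (rad i 0)).Nonempty := by
  obtain ⟨n, hn⟩ := Metric.denseRange_iff.1 (denseRange_ds (B := B)) 0 (rad i 0) (rad_pos i 0)
  exact ⟨n, ⟨0, (E.fiber x).zero_mem, by simpa [dist_comm] using hn⟩⟩

open Classical in
/-- the starting index function at scale `i` aiming at `ds j`. -/
noncomputable def start (j i : ℕ) : X → ℕ := fun x =>
  if ((E.fiber x : Set B) ∩ ball (ds j) (rad i 0)).Nonempty then j
  else Nat.find (E.exists_base i x)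

lemma measurable_start (j i : ℕ) : Measurable (E.start j i) := by
  classical
  refine Measurable.ite (E.meas_hit _ isOpen_ball) measurable_const ?_
  exact measurable_find _ fun n => E.meas_hit _ isOpen_ball

lemma start_inv (j i : ℕ) (x : X) :
    ((E.fiber x : Set B) ∩ ball (ds (E.start j i x)) (rad i 0)).Nonempty := by
  classical
  unfold start
  split
  · assumption
  · exact Nat.find_spec (E.exists_base i x)

lemma start_eq (j i : ℕ) (x : X)
    (h : ((E.fiber x : Set B) ∩ ball (ds j) (rad i 0)).Nonempty) :
    E.start j i x = j := by
  classical
  unfold start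
  simp [h]

lemma exists_step {σ : X → ℕ} {r s : ℝ} (hs : 0 < s)
    (hinv : ∀ x, ((E.fiber x : Set B) ∩ ball (ds (σ x)) r).Nonempty) (x : X) :
    ∃ n, ((E.fiber x : Set B) ∩ (ball (ds n) s ∩ ball (ds (σ x)) r)).Nonempty := by
  obtain ⟨y, hyF, hyb⟩ := hinv x
  obtain ⟨n, hn⟩ := Metric.denseRange_iff.1 (denseRange_ds (B := B)) y s hs
  exact ⟨n, y, hyF, by simpa [dist_comm] using hn, hyb⟩

open Classical in
/-- the chain of index functions at scale `i`, target `j`. -/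
noncomputable def chain (j i : ℕ) : ℕ → X → ℕ
  | 0 => E.start j i
  | (k+1) => fun x =>
      if h : ∃ n, ((E.fiber x : Set B) ∩
          (ball (ds n) (rad i (k+1)) ∩ ball (ds (chain j i k x)) (rad i k))).Nonempty
      then Nat.find h else 0

lemma chain_meas_inv (j i : ℕ) : ∀ k, Measurable (E.chain j i k) ∧
    ∀ x, ((E.fiber x : Set B) ∩ ball (ds (E.chain j i k x)) (rad i k)).Nonempty := by
  classical
  intro k
  induction k with
  | zero => exact ⟨E.measurable_start j i, E.start_inv j i⟩
  | succ k ih =>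
    obtain ⟨hm, hinv⟩ := ih
    have hex : ∀ x, ∃ n, ((E.fiber x : Set B) ∩
        (ball (ds n) (rad i (k+1)) ∩ ball (ds (E.chain j i k x)) (rad i k))).Nonempty :=
      E.exists_step (rad_pos i (k+1)) hinv
    have hval : ∀ x, E.chain j i (k+1) x = Nat.find (hex x) := by
      intro x
      simp only [chain, dif_pos (hex x)]
    constructor
    · have heq : E.chain j i (k+1) = fun x => Nat.find (hex x) := funext hval
      rw [heq]
      exact measurable_find _ fun n => E.meas_cond hm _ _ n
    · intro x
      rw [hval x]
      exact (Nat.find_spec (hex x)).mono (Set.inter_subset_inter_right _ Set.inter_subset_left)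

lemma chain_dist (j i : ℕ) (k : ℕ) (x : X) :
    dist (ds (E.chain j i (k+1) x) : B) (ds (E.chain j i k x)) ≤ rad i (k+1) + rad i k := by
  classical
  have hinv := (E.chain_meas_inv j i k).2
  have hex : ∀ x, ∃ n, ((E.fiber x : Set B) ∩
      (ball (ds n) (rad i (k+1)) ∩ ball (ds (E.chain j i k x)) (rad i k))).Nonempty :=
    E.exists_step (rad_pos i (k+1)) hinv
  have hval : E.chain j i (k+1) x = Nat.find (hex x) := by
    simp only [chain, dif_pos (hex x)]
  rw [hval]
  obtain ⟨y, _, hy1, hy2⟩ := Nat.find_spec (hex x)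
  have h1 : dist y (ds (Nat.find (hex x)) : B) < rad i (k+1) := mem_ball.1 hy1
  have h2 : dist y (ds (E.chain j i k x) : B) < rad i k := mem_ball.1 hy2
  calc dist (ds (Nat.find (hex x)) : B) (ds (E.chain j i k x))
      ≤ dist (ds (Nat.find (hex x)) : B) y + dist y (ds (E.chain j i k x)) := dist_triangle _ _ _
    _ ≤ rad i (k+1) + rad i k := by rw [dist_comm]; exact add_le_add h1.le h2.le


lemma chain_dist' (j i : ℕ) (k : ℕ) (x : X) :
    dist (ds (E.chain j i k x) : B) (ds (E.chain j i (k+1) x)) ≤ (2 * (2:ℝ)⁻¹ ^ i) * (2:ℝ)⁻¹ ^ k := by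
  rw [dist_comm]
  refine (E.chain_dist j i k x).trans ?_
  have h1 : rad i (k+1) ≤ (2:ℝ)⁻¹ ^ i * (2:ℝ)⁻¹ ^ k := by
    rw [← pow_add]
    exact pow_le_pow_of_le_one (by norm_num) (by norm_num) (by omega)
  have h2 : rad i k = (2:ℝ)⁻¹ ^ i * (2:ℝ)⁻¹ ^ k := by rw [rad, pow_add]
  rw [h2]; linarith

lemma chain_cauchy (j i : ℕ) (x : X) :
    CauchySeq (fun k => (ds (E.chain j i k x) : B)) :=
  cauchySeq_of_le_geometric 2⁻¹ (2 * (2:ℝ)⁻¹ ^ i) (by norm_num) (E.chain_dist' j i · x)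

/-- the approximate selection at scale `i`, target `ds j`. -/
noncomputable def sel (j i : ℕ) : X → B := fun x =>
  Filter.limUnder Filter.atTop (fun k => (ds (E.chain j i k x) : B))

lemma sel_tendsto (j i : ℕ) (x : X) :
    Filter.Tendsto (fun k => (ds (E.chain j i k x) : B)) Filter.atTop (nhds (E.sel j i x)) :=
  (E.chain_cauchy j i x).tendsto_limUnder

lemma rad_tendsto (i : ℕ) : Filter.Tendsto (fun k => rad i k) Filter.atTop (nhds 0) := by
  have : (fun k => rad i k) = fun k => (2:ℝ)⁻¹ ^ i * (2:ℝ)⁻¹ ^ k := by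
    funext k; rw [rad, pow_add]
  rw [this]
  simpa using (tendsto_pow_atTop_nhds_zero_of_lt_one (by norm_num : (0:ℝ) ≤ 2⁻¹)
    (by norm_num : (2:ℝ)⁻¹ < 1)).const_mul ((2:ℝ)⁻¹ ^ i)

lemma sel_mem (j i : ℕ) (x : X) : E.sel j i x ∈ E.fiber x := by
  have hinv := fun k => (E.chain_meas_inv j i k).2 x
  choose y hyF hyb using hinv
  have hy : Filter.Tendsto y Filter.atTop (nhds (E.sel j i x)) := by
    rw [tendsto_iff_dist_tendsto_zero]
    have hb : ∀ k, dist (y k) (E.sel j i x) ≤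
        rad i k + dist (ds (E.chain j i k x) : B) (E.sel j i x) := fun k =>
      (dist_triangle _ _ _).trans (add_le_add (mem_ball.1 (hyb k)).le le_rfl)
    have h0 : Filter.Tendsto (fun k => rad i k + dist (ds (E.chain j i k x) : B) (E.sel j i x))
        Filter.atTop (nhds 0) := by
      have := (rad_tendsto i).add (tendsto_iff_dist_tendsto_zero.1 (E.sel_tendsto j i x))
      simpa using this
    exact squeeze_zero (fun k => dist_nonneg) hb h0
  exact (E.isClosed_fiber x).mem_of_tendsto hy (Filter.Eventually.of_forall hyF)

lemma sel_close (j i : ℕ) (x : X)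
    (h : ((E.fiber x : Set B) ∩ ball (ds j) (rad i 0)).Nonempty) :
    dist (ds j : B) (E.sel j i x) ≤ 4 * (2:ℝ)⁻¹ ^ i := by
  have h0 := dist_le_of_le_geometric_of_tendsto₀ 2⁻¹ (2 * (2:ℝ)⁻¹ ^ i)
    (by norm_num) (E.chain_dist' j i · x) (E.sel_tendsto j i x)
  have : E.chain j i 0 x = j := E.start_eq j i x h
  rw [this] at h0
  calc dist (ds j : B) (E.sel j i x) ≤ 2 * (2:ℝ)⁻¹ ^ i / (1 - 2⁻¹) := h0
    _ = 4 * (2:ℝ)⁻¹ ^ i := by ring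

lemma sel_stronglyMeasurable (j i : ℕ) : MeasureTheory.StronglyMeasurable (E.sel j i) := by
  have hk : ∀ k, MeasureTheory.StronglyMeasurable (fun x => (ds (E.chain j i k x) : B)) := by
    intro k
    exact (continuous_of_discreteTopology (α := ℕ) (f := (ds : ℕ → B))).comp_stronglyMeasurable
      ((E.chain_meas_inv j i k).1.stronglyMeasurable)
  exact stronglyMeasurable_of_tendsto Filter.atTop hk
    (tendsto_pi_nhds.2 fun x => E.sel_tendsto j i x)

lemma sel_dense (x : X) {b : B} (hb : b ∈ E.fiber x) {ε : ℝ} (hε : 0 < ε) :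
    ∃ j i, dist (E.sel j i x) b < ε := by
  obtain ⟨i, hi⟩ := exists_pow_lt_of_lt_one (show (0:ℝ) < ε/5 by linarith)
    (show (2:ℝ)⁻¹ < 1 by norm_num)
  obtain ⟨j, hj⟩ := Metric.denseRange_iff.1 (denseRange_ds (B := B)) b (rad i 0) (rad_pos i 0)
  have hmem : ((E.fiber x : Set B) ∩ ball (ds j) (rad i 0)).Nonempty :=
    ⟨b, hb, by simpa [dist_comm] using hj⟩
  refine ⟨j, i, ?_⟩
  have h1 := E.sel_close j i x hmem
  have h2 : dist (ds j : B) b < (2:ℝ)⁻¹ ^ i := by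
    have : rad i 0 = (2:ℝ)⁻¹ ^ i := by simp [rad]
    rw [dist_comm]; rw [this] at hj; exact hj
  calc dist (E.sel j i x) b ≤ dist (E.sel j i x) (ds j : B) + dist (ds j : B) b := dist_triangle _ _ _
    _ < 4 * (2:ℝ)⁻¹ ^ i + (2:ℝ)⁻¹ ^ i := by rw [dist_comm] at h1; exact add_lt_add_of_le_of_lt h1 h2
    _ = 5 * ((2:ℝ)⁻¹ ^ i) := by ring
    _ < ε := by linarith


section Sections

variable (m : MeasureTheory.Measure X) [MeasureTheory.SigmaFinite m]

open MeasureTheory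

/-- the squared-norm formula for the `L²` norm. -/
lemma norm_sq_eq (u : Lp B 2 m) :
    ‖u‖ ^ 2 = (∫⁻ x, (‖(u : X → B) x‖₊ : ℝ≥0∞) ^ 2 ∂m).toReal := by
  rw [Lp.norm_def, eLpNorm_eq_lintegral_rpow_enorm_toReal two_ne_zero ENNReal.ofNat_ne_top]
  rw [ENNReal.toReal_ofNat]
  simp only [enorm_eq_nnnorm]
  have hint : ∫⁻ x, (‖(u : X → B) x‖₊ : ℝ≥0∞) ^ (2:ℝ) ∂m
      = ∫⁻ x, (‖(u : X → B) x‖₊ : ℝ≥0∞) ^ 2 ∂m := by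
    refine lintegral_congr fun x => ?_
    rw [show (2:ℝ) = ((2:ℕ):ℝ) by norm_num, ENNReal.rpow_natCast]
  rw [hint]
  set L := ∫⁻ x, (‖(u : X → B) x‖₊ : ℝ≥0∞) ^ 2 ∂m
  rw [← ENNReal.toReal_rpow, ← Real.rpow_natCast (L.toReal ^ ((1:ℝ)/2)) 2,
    ← Real.rpow_mul ENNReal.toReal_nonneg]
  norm_num

lemma lint_ne_top {u : X → B} (hu : MemLp u 2 m) :
    ∫⁻ x, (‖u x‖₊ : ℝ≥0∞) ^ 2 ∂m ≠ ∞ := by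
  have h := hu.2
  rw [eLpNorm_eq_lintegral_rpow_enorm_toReal two_ne_zero ENNReal.ofNat_ne_top] at h
  rw [ENNReal.toReal_ofNat] at h
  simp only [enorm_eq_nnnorm] at h
  have hint : ∫⁻ x, (‖u x‖₊ : ℝ≥0∞) ^ (2:ℝ) ∂m = ∫⁻ x, (‖u x‖₊ : ℝ≥0∞) ^ 2 ∂m := by
    refine lintegral_congr fun x => ?_
    rw [show (2:ℝ) = ((2:ℕ):ℝ) by norm_num, ENNReal.rpow_natCast]
  rw [hint] at h
  intro hcon
  rw [hcon] at h
  simp [ENNReal.top_rpow_of_pos] at h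

lemma indicator_nnnorm_sq (s : Set X) (g : X → B) (x : X) :
    (‖s.indicator g x‖₊ : ℝ≥0∞) ^ 2 = s.indicator (fun y => (‖g y‖₊ : ℝ≥0∞) ^ 2) x := by
  by_cases hx : x ∈ s <;> simp [Set.indicator_of_mem, Set.indicator_of_notMem, hx]

lemma key (hHilb : ∀ v w : E.sections m 2,
      ‖v + w‖ ^ 2 + ‖v - w‖ ^ 2 = 2 * ‖v‖ ^ 2 + 2 * ‖w‖ ^ 2)
    (v w : Lp B 2 m) (hv : v ∈ E.sections m 2) (hw : w ∈ E.sections m 2) :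
    ∀ᵐ x ∂m, (‖(v : X → B) x + (w : X → B) x‖₊ : ℝ≥0∞) ^ 2
        + (‖(v : X → B) x - (w : X → B) x‖₊ : ℝ≥0∞) ^ 2
      = 2 * (‖(v : X → B) x‖₊ : ℝ≥0∞) ^ 2 + 2 * (‖(w : X → B) x‖₊ : ℝ≥0∞) ^ 2 := by
  set V : X → B := (v : X → B) with hV
  set W : X → B := (w : X → B) with hW
  have hVm : MemLp V 2 m := Lp.memLp v
  have hWm : MemLp W 2 m := Lp.memLp w
  have mVW : AEMeasurable (fun x => (‖V x + W x‖₊ : ℝ≥0∞) ^ 2) m :=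
    ((hVm.aestronglyMeasurable.add hWm.aestronglyMeasurable).enorm).pow_const 2
  have mVW' : AEMeasurable (fun x => (‖V x - W x‖₊ : ℝ≥0∞) ^ 2) m :=
    ((hVm.aestronglyMeasurable.sub hWm.aestronglyMeasurable).enorm).pow_const 2
  have mV : AEMeasurable (fun x => (‖V x‖₊ : ℝ≥0∞) ^ 2) m :=
    (hVm.aestronglyMeasurable.enorm).pow_const 2
  have mW : AEMeasurable (fun x => (‖W x‖₊ : ℝ≥0∞) ^ 2) m :=
    (hWm.aestronglyMeasurable.enorm).pow_const 2
  refine ae_eq_of_forall_setLIntegral_eq_of_sigmaFinite₀ (mVW.add mVW')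
    ((mV.const_mul 2).add (mW.const_mul 2)) ?_
  intro s hs hfin
  have hVi : MemLp (s.indicator V) 2 m := hVm.indicator hs
  have hWi : MemLp (s.indicator W) 2 m := hWm.indicator hs
  set vs : Lp B 2 m := hVi.toLp _ with hvs
  set ws : Lp B 2 m := hWi.toLp _ with hws
  have hv' : ∀ᵐ x ∂m, V x ∈ E.fiber x := hv
  have hw' : ∀ᵐ x ∂m, W x ∈ E.fiber x := hw
  have hvs_mem : vs ∈ E.sections m 2 := by
    show ∀ᵐ x ∂m, (vs : X → B) x ∈ E.fiber x
    filter_upwards [hVi.coeFn_toLp, hv'] with x h1 h2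
    rw [h1]
    by_cases hx : x ∈ s
    · rw [Set.indicator_of_mem hx]; exact h2
    · rw [Set.indicator_of_notMem hx]; exact zero_mem _
  have hws_mem : ws ∈ E.sections m 2 := by
    show ∀ᵐ x ∂m, (ws : X → B) x ∈ E.fiber x
    filter_upwards [hWi.coeFn_toLp, hw'] with x h1 h2
    rw [h1]
    by_cases hx : x ∈ s
    · rw [Set.indicator_of_mem hx]; exact h2
    · rw [Set.indicator_of_notMem hx]; exact zero_mem _
  have key0 := hHilb ⟨vs, hvs_mem⟩ ⟨ws, hws_mem⟩
  simp only [Submodule.coe_norm, Submodule.coe_add, Submodule.coe_sub] at key0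
  -- key0 : ‖vs + ws‖^2 + ‖vs - ws‖^2 = 2‖vs‖^2 + 2‖ws‖^2 in Lp
  set L1 := ∫⁻ x in s, (‖V x + W x‖₊ : ℝ≥0∞) ^ 2 ∂m with hL1
  set L2 := ∫⁻ x in s, (‖V x - W x‖₊ : ℝ≥0∞) ^ 2 ∂m with hL2
  set L3 := ∫⁻ x in s, (‖V x‖₊ : ℝ≥0∞) ^ 2 ∂m with hL3
  set L4 := ∫⁻ x in s, (‖W x‖₊ : ℝ≥0∞) ^ 2 ∂m with hL4
  have hL1t : L1 ≠ ∞ :=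
    ((setLIntegral_le_lintegral s _).trans_lt
      (lt_top_iff_ne_top.2 (lint_ne_top m (hVm.add hWm)))).ne
  have hL2t : L2 ≠ ∞ :=
    ((setLIntegral_le_lintegral s _).trans_lt
      (lt_top_iff_ne_top.2 (lint_ne_top m (hVm.sub hWm)))).ne
  have hL3t : L3 ≠ ∞ :=
    ((setLIntegral_le_lintegral s _).trans_lt
      (lt_top_iff_ne_top.2 (lint_ne_top m hVm))).ne
  have hL4t : L4 ≠ ∞ :=
    ((setLIntegral_le_lintegral s _).trans_lt
      (lt_top_iff_ne_top.2 (lint_ne_top m hWm))).ne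
  have c1 : ‖vs + ws‖ ^ 2 = L1.toReal := by
    rw [norm_sq_eq m]
    congr 1
    calc ∫⁻ x, (‖((vs + ws : Lp B 2 m) : X → B) x‖₊ : ℝ≥0∞) ^ 2 ∂m
        = ∫⁻ x, (‖s.indicator (fun y => V y + W y) x‖₊ : ℝ≥0∞) ^ 2 ∂m := by
          refine lintegral_congr_ae ?_
          filter_upwards [Lp.coeFn_add vs ws, hVi.coeFn_toLp, hWi.coeFn_toLp] with x h1 h2 h3
          rw [h1, Pi.add_apply, h2, h3]
          by_cases hx : x ∈ s <;>
            simp [Set.indicator_of_mem, Set.indicator_of_notMem, hx]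
      _ = ∫⁻ x, s.indicator (fun y => (‖V y + W y‖₊ : ℝ≥0∞) ^ 2) x ∂m :=
          lintegral_congr fun x => indicator_nnnorm_sq _ _ _
      _ = L1 := lintegral_indicator hs _
  have c2 : ‖vs - ws‖ ^ 2 = L2.toReal := by
    rw [norm_sq_eq m]
    congr 1
    calc ∫⁻ x, (‖((vs - ws : Lp B 2 m) : X → B) x‖₊ : ℝ≥0∞) ^ 2 ∂m
        = ∫⁻ x, (‖s.indicator (fun y => V y - W y) x‖₊ : ℝ≥0∞) ^ 2 ∂m := by
          refine lintegral_congr_ae ?_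
          filter_upwards [Lp.coeFn_sub vs ws, hVi.coeFn_toLp, hWi.coeFn_toLp] with x h1 h2 h3
          rw [h1, Pi.sub_apply, h2, h3]
          by_cases hx : x ∈ s <;>
            simp [Set.indicator_of_mem, Set.indicator_of_notMem, hx]
      _ = ∫⁻ x, s.indicator (fun y => (‖V y - W y‖₊ : ℝ≥0∞) ^ 2) x ∂m :=
          lintegral_congr fun x => indicator_nnnorm_sq _ _ _
      _ = L2 := lintegral_indicator hs _
  have c3 : ‖vs‖ ^ 2 = L3.toReal := by
    rw [norm_sq_eq m]
    congr 1
    calc ∫⁻ x, (‖(vs : X → B) x‖₊ : ℝ≥0∞) ^ 2 ∂m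
        = ∫⁻ x, (‖s.indicator V x‖₊ : ℝ≥0∞) ^ 2 ∂m := by
          refine lintegral_congr_ae ?_
          filter_upwards [hVi.coeFn_toLp] with x h1
          rw [h1]
      _ = ∫⁻ x, s.indicator (fun y => (‖V y‖₊ : ℝ≥0∞) ^ 2) x ∂m :=
          lintegral_congr fun x => indicator_nnnorm_sq _ _ _
      _ = L3 := lintegral_indicator hs _
  have c4 : ‖ws‖ ^ 2 = L4.toReal := by
    rw [norm_sq_eq m]
    congr 1
    calc ∫⁻ x, (‖(ws : X → B) x‖₊ : ℝ≥0∞) ^ 2 ∂m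
        = ∫⁻ x, (‖s.indicator W x‖₊ : ℝ≥0∞) ^ 2 ∂m := by
          refine lintegral_congr_ae ?_
          filter_upwards [hWi.coeFn_toLp] with x h1
          rw [h1]
      _ = ∫⁻ x, s.indicator (fun y => (‖W y‖₊ : ℝ≥0∞) ^ 2) x ∂m :=
          lintegral_congr fun x => indicator_nnnorm_sq _ _ _
      _ = L4 := lintegral_indicator hs _
  rw [c1, c2, c3, c4] at key0
  have hEnn : L1 + L2 = 2 * L3 + 2 * L4 := by
    have h2t : (2 : ℝ≥0∞) ≠ ∞ := by norm_num
    refine (ENNReal.toReal_eq_toReal_iff' (ENNReal.add_ne_top.2 ⟨hL1t, hL2t⟩)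
      (ENNReal.add_ne_top.2 ⟨ENNReal.mul_ne_top h2t hL3t, ENNReal.mul_ne_top h2t hL4t⟩)).1 ?_
    rw [ENNReal.toReal_add hL1t hL2t,
      ENNReal.toReal_add (ENNReal.mul_ne_top h2t hL3t) (ENNReal.mul_ne_top h2t hL4t),
      ENNReal.toReal_mul, ENNReal.toReal_mul, ENNReal.toReal_ofNat]
    exact key0
  calc ∫⁻ x in s, ((‖V x + W x‖₊ : ℝ≥0∞) ^ 2 + (‖V x - W x‖₊ : ℝ≥0∞) ^ 2) ∂m
      = L1 + L2 := lintegral_add_left' (mVW.restrict) _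
    _ = 2 * L3 + 2 * L4 := hEnn
    _ = ∫⁻ x in s, (2 * (‖V x‖₊ : ℝ≥0∞) ^ 2 + 2 * (‖W x‖₊ : ℝ≥0∞) ^ 2) ∂m := by
        rw [lintegral_add_left' ((mV.restrict).const_mul 2) _,
          lintegral_const_mul' 2 _ (by norm_num), lintegral_const_mul' 2 _ (by norm_num)]

noncomputable def trunc (j i n : ℕ) : X → B :=
  (spanningSets m n ∩ {x | ‖E.sel j i x‖ ≤ (n:ℝ)}).indicator (E.sel j i)

lemma trunc_measSet (j i n : ℕ) :
    MeasurableSet (spanningSets m n ∩ {x | ‖E.sel j i x‖ ≤ (n:ℝ)}) :=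
  (measurableSet_spanningSets m n).inter
    ((E.sel_stronglyMeasurable j i).norm.measurable measurableSet_Iic)

lemma trunc_memℒp (j i n : ℕ) : MemLp (E.trunc m j i n) 2 m := by
  rw [trunc, memLp_indicator_iff_restrict (E.trunc_measSet m j i n)]
  haveI : IsFiniteMeasure (m.restrict (spanningSets m n ∩ {x | ‖E.sel j i x‖ ≤ (n:ℝ)})) := by
    constructor
    rw [Measure.restrict_apply_univ]
    exact (measure_mono Set.inter_subset_left).trans_lt (measure_spanningSets_lt_top m n)
  refine MemLp.of_bound (E.sel_stronglyMeasurable j i).aestronglyMeasurable (n:ℝ) ?_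
  rw [ae_restrict_iff' (E.trunc_measSet m j i n)]
  exact Filter.Eventually.of_forall fun x hx => hx.2

lemma trunc_mem_fiber (j i n : ℕ) (x : X) : E.trunc m j i n x ∈ E.fiber x := by
  rw [trunc]
  by_cases hx : x ∈ spanningSets m n ∩ {x | ‖E.sel j i x‖ ≤ (n:ℝ)}
  · rw [Set.indicator_of_mem hx]; exact E.sel_mem j i x
  · rw [Set.indicator_of_notMem hx]; exact zero_mem _

lemma trunc_exhaust (j i : ℕ) (x : X) : ∃ n, E.trunc m j i n x = E.sel j i x := by
  have hx : x ∈ ⋃ n, spanningSets m n := by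
    rw [iUnion_spanningSets]; trivial
  obtain ⟨n₀, hn₀⟩ := Set.mem_iUnion.1 hx
  refine ⟨max n₀ ⌈‖E.sel j i x‖⌉₊, ?_⟩
  rw [trunc, Set.indicator_of_mem]
  refine ⟨monotone_spanningSets m (le_max_left _ _) hn₀, ?_⟩
  show ‖E.sel j i x‖ ≤ ((max n₀ ⌈‖E.sel j i x‖⌉₊ : ℕ) : ℝ)
  calc ‖E.sel j i x‖ ≤ (⌈‖E.sel j i x‖⌉₊ : ℝ) := Nat.le_ceil _
    _ ≤ ((max n₀ ⌈‖E.sel j i x‖⌉₊ : ℕ) : ℝ) := by exact_mod_cast le_max_right _ _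

lemma par_iff (a b : B) :
    ((‖a + b‖₊ : ℝ≥0∞) ^ 2 + (‖a - b‖₊ : ℝ≥0∞) ^ 2
        = 2 * (‖a‖₊ : ℝ≥0∞) ^ 2 + 2 * (‖b‖₊ : ℝ≥0∞) ^ 2)
      ↔ ‖a + b‖ ^ 2 + ‖a - b‖ ^ 2 = 2 * ‖a‖ ^ 2 + 2 * ‖b‖ ^ 2 := by
  have hsq : ∀ c : B, (‖c‖₊ : ℝ≥0∞) ^ 2 = ENNReal.ofReal (‖c‖ ^ 2) := fun c => by
    rw [← enorm_eq_nnnorm, ← ofReal_norm, ← ENNReal.ofReal_pow (norm_nonneg _)]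
  have h2 : (2 : ℝ≥0∞) = ENNReal.ofReal (2:ℝ) := by norm_num
  rw [hsq, hsq, hsq, hsq, h2, ← ENNReal.ofReal_mul (by norm_num), ← ENNReal.ofReal_mul (by norm_num),
    ← ENNReal.ofReal_add (by positivity) (by positivity),
    ← ENNReal.ofReal_add (by positivity) (by positivity),
    ENNReal.ofReal_eq_ofReal_iff (by positivity) (by positivity)]

theorem main (hHilb : ∀ v w : E.sections m 2,
      ‖v + w‖ ^ 2 + ‖v - w‖ ^ 2 = 2 * ‖v‖ ^ 2 + 2 * ‖w‖ ^ 2) :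
    ∀ᵐ x ∂m, ∀ a ∈ E.fiber x, ∀ b ∈ E.fiber x,
      ‖a + b‖ ^ 2 + ‖a - b‖ ^ 2 = 2 * ‖a‖ ^ 2 + 2 * ‖b‖ ^ 2 := by
  classical
  set t : ℕ × ℕ × ℕ → X → B := fun q => E.trunc m q.1 q.2.1 q.2.2 with ht
  have htmem : ∀ q : ℕ × ℕ × ℕ, MemLp (t q) 2 m := fun q => E.trunc_memℒp m _ _ _
  set tLp : ℕ × ℕ × ℕ → Lp B 2 m := fun q => (htmem q).toLp _ with htLp
  have hsec : ∀ q, tLp q ∈ E.sections m 2 := by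
    intro q
    show ∀ᵐ x ∂m, (tLp q : X → B) x ∈ E.fiber x
    filter_upwards [(htmem q).coeFn_toLp] with x hx
    rw [hx]
    exact E.trunc_mem_fiber m _ _ _ x
  have hkey : ∀ᵐ x ∂m, ∀ q q' : ℕ × ℕ × ℕ,
      (‖(tLp q : X → B) x + (tLp q' : X → B) x‖₊ : ℝ≥0∞) ^ 2
          + (‖(tLp q : X → B) x - (tLp q' : X → B) x‖₊ : ℝ≥0∞) ^ 2
        = 2 * (‖(tLp q : X → B) x‖₊ : ℝ≥0∞) ^ 2 + 2 * (‖(tLp q' : X → B) x‖₊ : ℝ≥0∞) ^ 2 := by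
    rw [ae_all_iff]
    intro q
    rw [ae_all_iff]
    intro q'
    exact E.key m hHilb _ _ (hsec q) (hsec q')
  have hcoe : ∀ᵐ x ∂m, ∀ q : ℕ × ℕ × ℕ, (tLp q : X → B) x = t q x := by
    rw [ae_all_iff]
    exact fun q => (htmem q).coeFn_toLp
  filter_upwards [hkey, hcoe] with x hx hc a ha b hb
  set S : Set B := Set.range fun q : ℕ × ℕ × ℕ => t q x with hS
  have hdense : ∀ c ∈ E.fiber x, c ∈ closure S := by
    intro c hc'
    rw [Metric.mem_closure_iff]
    intro ε hε
    obtain ⟨j, i, hji⟩ := E.sel_dense x hc' hε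
    obtain ⟨n, hn⟩ := E.trunc_exhaust m j i x
    exact ⟨t (j, i, n) x, ⟨(j, i, n), rfl⟩, by
      show dist c (E.trunc m j i n x) < ε
      rw [hn, dist_comm]
      exact hji⟩
  set Z : Set (B × B) := {p : B × B |
    ‖p.1 + p.2‖ ^ 2 + ‖p.1 - p.2‖ ^ 2 = 2 * ‖p.1‖ ^ 2 + 2 * ‖p.2‖ ^ 2} with hZ
  have hZc : IsClosed Z := by
    refine isClosed_eq ?_ ?_
    · exact ((continuous_fst.add continuous_snd).norm.pow 2).add
        ((continuous_fst.sub continuous_snd).norm.pow 2)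
    · exact (continuous_const.mul (continuous_fst.norm.pow 2)).add
        (continuous_const.mul (continuous_snd.norm.pow 2))
  have hzero : S ×ˢ S ⊆ Z := by
    rintro ⟨p1, p2⟩ ⟨⟨q, rfl⟩, ⟨q', rfl⟩⟩
    have e := hx q q'
    rw [hc q, hc q'] at e
    exact (par_iff _ _).1 e
  have hcl : closure (S ×ˢ S) ⊆ Z := closure_minimal hzero hZc
  have hab : (a, b) ∈ closure (S ×ˢ S) := by
    rw [closure_prod_eq]
    exact ⟨hdense a ha, hdense b hb⟩
  exact hcl hab

end Sections

end BanachBundle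


/-- If `B` is separable and the section space `Γ₂(E)` of a Banach `B`-bundle is a Hilbert
space (equivalently, satisfies the parallelogram law), then `m`-a.e. fiber `E(x)` is a
Hilbert space (i.e. satisfies the parallelogram law). -/
theorem ae_fiber_parallelogram_of_sections_hilbert
    {X B : Type*} [MeasurableSpace X] (m : Measure X) [SigmaFinite m]
    [NormedAddCommGroup B] [NormedSpace ℝ B] [CompleteSpace B]
    [TopologicalSpace.SeparableSpace B]
    (E : BanachBundle X B)
    (hHilb : ∀ v w : E.sections m 2,
      ‖v + w‖ ^ 2 + ‖v - w‖ ^ 2 = 2 * ‖v‖ ^ 2 + 2 * ‖w‖ ^ 2) :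
    ∀ᵐ x ∂m, ∀ a ∈ E.fiber x, ∀ b ∈ E.fiber x,
      ‖a + b‖ ^ 2 + ‖a - b‖ ^ 2 = 2 * ‖a‖ ^ 2 + 2 * ‖b‖ ^ 2 :=
  E.main m hHilb
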